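/- Let x ∈ S^{n-1} be incompressible with parameters c₀, c₁ ∈ (0,1), i.e. the Euclidean distance from x to every vector with at most c₀n nonzero coordinates is at least c₁. Then there exists a set σ ⊆ {1,…,n} with |σ| ≥ c₀c₁²n/2 such that c₁/√(2n) ≤ |x_k| ≤ 1/√(c₀ n) for all k ∈ σ. -/

import Mathlib

/-- Every incompressible unit vector has `≥ c₀c₁²n/2` coordinates of magnitude
between `c₁/√(2n)` and `1/√(c₀n)`. -/
theorem stmt10 (n : ℕ) (c₀ c₁ : ℝ) (hc₀ : c₀ ∈ Set.Ioo (0:ℝ) 1)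
    (hc₁ : c₁ ∈ Set.Ioo (0:ℝ) 1)
    (x : Fin n → ℝ) (hx : Real.sqrt (∑ i, x i ^ 2) = 1)
    (hinc : ∀ y : Fin n → ℝ,
      ((Finset.univ.filter fun i => y i ≠ 0).card : ℝ) ≤ c₀ * n →
      c₁ ≤ Real.sqrt (∑ i, (x i - y i) ^ 2)) :
    ∃ σ : Finset (Fin n), c₀ * c₁ ^ 2 * n / 2 ≤ (σ.card : ℝ) ∧
      ∀ k ∈ σ, c₁ / Real.sqrt (2 * n) ≤ |x k| ∧ |x k| ≤ 1 / Real.sqrt (c₀ * n) := by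
  obtain ⟨hc0, hc0'⟩ := hc₀
  obtain ⟨hc1, hc1'⟩ := hc₁
  have hnonneg : (0:ℝ) ≤ ∑ i, x i ^ 2 := Finset.sum_nonneg fun i _ => sq_nonneg _
  have hsum : ∑ i, x i ^ 2 = 1 := by
    nlinarith [Real.sq_sqrt hnonneg, hx]
  have hn : 0 < n := by
    by_contra h
    push_neg at h
    interval_cases n
    simp at hsum
  have hN : (0:ℝ) < n := by exact_mod_cast hn
  have hcN : 0 < c₀ * n := by positivity
  set a : ℝ := 1 / Real.sqrt (c₀ * n) with ha
  set b : ℝ := c₁ / Real.sqrt (2 * n) with hb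
  have ha0 : 0 ≤ a := by positivity
  have hb0 : 0 ≤ b := by positivity
  have ha2 : a ^ 2 = 1 / (c₀ * n) := by
    rw [ha, div_pow, one_pow, Real.sq_sqrt hcN.le]
  have hb2 : b ^ 2 = c₁ ^ 2 / (2 * n) := by
    rw [hb, div_pow, Real.sq_sqrt (by positivity)]
  set A : Finset (Fin n) := Finset.univ.filter fun k => a < |x k| with hA
  -- card A ≤ c₀ n
  have hcardA : (A.card : ℝ) ≤ c₀ * n := by
    have h1 : A.card • (1 / (c₀ * n)) ≤ ∑ k ∈ A, x k ^ 2 := by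
      apply Finset.card_nsmul_le_sum
      intro k hk
      have hk' : a < |x k| := by
        simpa [hA] using hk
      nlinarith [sq_abs (x k)]
    have h2 : ∑ k ∈ A, x k ^ 2 ≤ 1 := by
      rw [← hsum]
      exact Finset.sum_le_sum_of_subset_of_nonneg (Finset.subset_univ _)
        (fun i _ _ => sq_nonneg _)
    rw [nsmul_eq_mul] at h1
    rw [← mul_le_mul_iff_of_pos_right (show (0:ℝ) < 1 / (c₀ * n) by positivity)]
    calc (A.card : ℝ) * (1 / (c₀ * n)) ≤ 1 := h1.trans h2
    _ = (c₀ * n) * (1 / (c₀ * n)) := by field_simp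
  -- incompressibility gives mass outside A
  set B : Finset (Fin n) := Finset.univ.filter fun k => ¬ a < |x k| with hB
  have hmass : c₁ ^ 2 ≤ ∑ k ∈ B, x k ^ 2 := by
    set y : Fin n → ℝ := fun k => if k ∈ A then x k else 0 with hy
    have hsupp : (Finset.univ.filter fun i => y i ≠ 0) ⊆ A := by
      intro i hi
      simp only [hy, Finset.mem_filter, Finset.mem_univ, true_and] at hi
      by_contra h
      simp [h] at hi
    have h1 : c₁ ≤ Real.sqrt (∑ i, (x i - y i) ^ 2) :=
      hinc y (le_trans (by exact_mod_cast Finset.card_le_card hsupp) hcardA)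
    have h2 : ∑ i, (x i - y i) ^ 2 = ∑ k ∈ B, x k ^ 2 := by
      rw [hB, Finset.sum_filter]
      apply Finset.sum_congr rfl
      intro i _
      by_cases h : i ∈ A
      · have : a < |x i| := by simpa [hA] using h
        simp [hy, h, this]
      · have : ¬ a < |x i| := by
          intro hlt
          exact h (by simp [hA, hlt])
        simp [hy, h, this]
    rw [h2] at h1
    have hBnn : (0:ℝ) ≤ ∑ k ∈ B, x k ^ 2 := Finset.sum_nonneg fun i _ => sq_nonneg _
    nlinarith [Real.sq_sqrt hBnn]
  -- define σ
  set σ : Finset (Fin n) := Finset.univ.filter fun k => b ≤ |x k| ∧ |x k| ≤ a with hσ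
  have hσB : σ ⊆ B := by
    intro k hk
    simp only [hσ, Finset.mem_filter, Finset.mem_univ, true_and] at hk
    simp only [hB, Finset.mem_filter, Finset.mem_univ, true_and, not_lt]
    exact hk.2
  -- bound the small part
  have hsmall : ∑ k ∈ B \ σ, x k ^ 2 ≤ c₁ ^ 2 / 2 := by
    have h1 : ∑ k ∈ B \ σ, x k ^ 2 ≤ (B \ σ).card • (c₁ ^ 2 / (2 * n)) := by
      apply Finset.sum_le_card_nsmul
      intro k hk
      rw [Finset.mem_sdiff] at hk
      obtain ⟨hkB, hkσ⟩ := hk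
      have h2 : ¬ a < |x k| := by simpa [hB] using hkB
      have h3 : |x k| < b := by
        by_contra h
        push_neg at h
        exact hkσ (by simp [hσ, h, not_lt.mp h2])
      rw [← hb2]
      nlinarith [sq_abs (x k), abs_nonneg (x k)]
    have h2 : ((B \ σ).card : ℝ) ≤ n := by
      exact_mod_cast (Finset.card_le_card (Finset.subset_univ _)).trans_eq
        (by simp)
    rw [nsmul_eq_mul] at h1
    calc ∑ k ∈ B \ σ, x k ^ 2 ≤ ((B \ σ).card : ℝ) * (c₁ ^ 2 / (2 * n)) := h1
    _ ≤ n * (c₁ ^ 2 / (2 * n)) := by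
        apply mul_le_mul_of_nonneg_right h2 (by positivity)
    _ = c₁ ^ 2 / 2 := by field_simp
  -- mass on σ
  have hσmass : c₁ ^ 2 / 2 ≤ ∑ k ∈ σ, x k ^ 2 := by
    have h1 : ∑ k ∈ B \ σ, x k ^ 2 + ∑ k ∈ σ, x k ^ 2 = ∑ k ∈ B, x k ^ 2 :=
      Finset.sum_sdiff hσB
    linarith
  -- each term on σ is ≤ 1/(c₀ n)
  have hup : ∑ k ∈ σ, x k ^ 2 ≤ σ.card • (1 / (c₀ * n)) := by
    apply Finset.sum_le_card_nsmul
    intro k hk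
    simp only [hσ, Finset.mem_filter, Finset.mem_univ, true_and] at hk
    rw [← ha2]
    nlinarith [sq_abs (x k), abs_nonneg (x k), hk.1, hk.2]
  rw [nsmul_eq_mul] at hup
  refine ⟨σ, ?_, ?_⟩
  · have h1 : c₁ ^ 2 / 2 ≤ (σ.card : ℝ) * (1 / (c₀ * n)) := hσmass.trans hup
    calc c₀ * c₁ ^ 2 * n / 2 = (c₁ ^ 2 / 2) * (c₀ * n) := by ring
    _ ≤ ((σ.card : ℝ) * (1 / (c₀ * n))) * (c₀ * n) :=
        mul_le_mul_of_nonneg_right h1 hcN.le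
    _ = (σ.card : ℝ) := by field_simp
  · intro k hk
    simp only [hσ, Finset.mem_filter, Finset.mem_univ, true_and] at hk
    exact hk
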